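/- A seminorm x on ℚ^n obtained by homogeneous extension of an integer-valued, ℤ-homogeneous, subadditive function on ℤ^n extends uniquely to a continuous seminorm on ℝ^n. -/

import Mathlib

/-- A `ℚ`-homogeneous subadditive function on `ℚ^n` (such as the homogeneous extension of
the integral Thurston norm) extends uniquely to a continuous seminorm on `ℝ^n`. -/
theorem stmt2 (n : ℕ) (x : (Fin n → ℚ) → ℚ)
    (hhom : ∀ (q : ℚ) (v : Fin n → ℚ), x (q • v) = |q| * x v)
    (hsub : ∀ u v : Fin n → ℚ, x (u + v) ≤ x u + x v) :
    ∃! y : (Fin n → ℝ) → ℝ,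
      Continuous y ∧
      (∀ v : Fin n → ℚ, y (fun i => ((v i : ℚ) : ℝ)) = ((x v : ℚ) : ℝ)) ∧
      (∀ (c : ℝ) (u : Fin n → ℝ), y (c • u) = |c| * y u) ∧
      (∀ u v : Fin n → ℝ, y (u + v) ≤ y u + y v) := by
  -- basic facts about x
  have hx0 : x 0 = 0 := by
    have := hhom 0 0; simpa using this
  have hnonneg : ∀ v, 0 ≤ x v := by
    intro v
    have h1 := hsub v (-v)
    have h2 := hhom (-1) v
    simp only [neg_smul, one_smul, abs_neg, abs_one, one_mul] at h2
    rw [add_neg_cancel, hx0] at h1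
    linarith
  have habs : ∀ u v : Fin n → ℚ, |x u - x v| ≤ x (u - v) := by
    intro u v
    rw [abs_sub_le_iff]
    constructor
    · have h := hsub (u - v) v
      rw [sub_add_cancel] at h; linarith
    · have h := hsub (v - u) u
      have h2 := hhom (-1) (u - v)
      simp only [neg_smul, one_smul, abs_neg, abs_one, one_mul, neg_sub] at h2
      rw [sub_add_cancel] at h; linarith
  -- bound by the l1-type sum
  have hsum : ∀ (s : Finset (Fin n)) (g : Fin n → (Fin n → ℚ)),
      x (∑ i ∈ s, g i) ≤ ∑ i ∈ s, x (g i) := by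
    intro s g
    induction s using Finset.induction with
    | empty => simp [hx0]
    | insert a s hi ih =>
      rw [Finset.sum_insert hi, Finset.sum_insert hi]
      exact le_trans (hsub _ _) (by linarith)
  have hxle : ∀ v : Fin n → ℚ, x v ≤ ∑ i, |v i| * x (Pi.single i 1) := by
    intro v
    have hv : v = ∑ i, (v i) • (Pi.single i 1 : Fin n → ℚ) := by
      funext j
      simp [Finset.sum_apply, Pi.single_apply, Finset.sum_ite_eq']
    calc x v = x (∑ i, (v i) • (Pi.single i 1 : Fin n → ℚ)) := by rw [← hv]
      _ ≤ ∑ i, x ((v i) • (Pi.single i 1 : Fin n → ℚ)) := hsum _ _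
      _ = ∑ i, |v i| * x (Pi.single i 1) := by
          apply Finset.sum_congr rfl; intro i _; exact hhom _ _
  -- the embedding ι : ℚ^n → ℝ^n
  set ι : (Fin n → ℚ) → (Fin n → ℝ) := fun v => fun i => ((v i : ℚ) : ℝ) with hι
  have hiso : Isometry ι := by
    have : ι = Pi.map (fun _ : Fin n => ((↑) : ℚ → ℝ)) := rfl
    rw [this]
    exact Isometry.piMap _ (fun i => fun p q => by
      rw [edist_dist, edist_dist, Rat.dist_cast])
  have hdr : DenseRange ι := by
    have : Set.range ι = Set.pi Set.univ fun _ : Fin n => Set.range ((↑) : ℚ → ℝ) := by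
      rw [hι]; exact Set.range_piMap _
    rw [DenseRange, this]
    exact dense_pi _ (fun i _ => Rat.denseRange_cast)
  have hui : IsUniformInducing ι := hiso.isUniformInducing
  have hdi : IsDenseInducing ι := hui.isDenseInducing hdr
  -- the function f : ℚ^n → ℝ
  set f : (Fin n → ℚ) → ℝ := fun v => ((x v : ℚ) : ℝ) with hf
  set C : ℝ := ∑ i, ((x (Pi.single i 1) : ℚ) : ℝ) with hC
  have hCnn : 0 ≤ C := Finset.sum_nonneg fun i _ => by exact_mod_cast hnonneg _
  have hlip : ∀ u v : Fin n → ℚ, dist (f u) (f v) ≤ C * dist u v := by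
    intro u v
    have h1 : dist (f u) (f v) = ((|x u - x v| : ℚ) : ℝ) := by
      rw [Real.dist_eq]; push_cast; rfl
    rw [h1]
    calc ((|x u - x v| : ℚ) : ℝ) ≤ ((x (u - v) : ℚ) : ℝ) := by exact_mod_cast habs u v
      _ ≤ ((∑ i, |(u - v) i| * x (Pi.single i 1) : ℚ) : ℝ) := by exact_mod_cast hxle (u - v)
      _ = ∑ i, ((|(u - v) i| : ℚ) : ℝ) * ((x (Pi.single i 1) : ℚ) : ℝ) := by push_cast; ring
      _ ≤ ∑ i, dist u v * ((x (Pi.single i 1) : ℚ) : ℝ) := by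
          apply Finset.sum_le_sum
          intro i _
          apply mul_le_mul_of_nonneg_right _ (by exact_mod_cast hnonneg _)
          have : ((|(u - v) i| : ℚ) : ℝ) = dist (u i) (v i) := by
            rw [← Rat.dist_cast, Real.dist_eq]; push_cast; simp [abs_sub_comm]
          rw [this]
          exact dist_le_pi_dist u v i
      _ = C * dist u v := by rw [hC, ← Finset.mul_sum, mul_comm]
  have hfu : UniformContinuous f := by
    apply LipschitzWith.uniformContinuous (K := ⟨C, hCnn⟩)
    apply LipschitzWith.of_dist_le_mul
    intro u v
    exact hlip u v
  -- define y as the extension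
  set y : (Fin n → ℝ) → ℝ := hdi.extend f with hy
  have hycont : Continuous y :=
    (uniformContinuous_uniformly_extend hui hdr hfu).continuous
  have hagree : ∀ v : Fin n → ℚ, y (ι v) = f v := fun v =>
    hdi.extend_eq hfu.continuous v
  have hιadd : ∀ u v : Fin n → ℚ, ι (u + v) = ι u + ι v := by
    intro u v; funext i; simp [hι]
  have hιsmul : ∀ (q : ℚ) (v : Fin n → ℚ), ι (q • v) = (q : ℝ) • ι v := by
    intro q v; funext i; simp [hι]
  refine ⟨y, ⟨hycont, fun v => hagree v, ?_, ?_⟩, ?_⟩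
  · -- homogeneity
    intro c u
    have hd : Dense (Set.range fun p : ℚ × (Fin n → ℚ) => ((p.1 : ℝ), ι p.2)) :=
      Rat.denseRange_cast.prodMap hdr
    have h1 : Continuous fun p : ℝ × (Fin n → ℝ) => y (p.1 • p.2) :=
      hycont.comp (continuous_fst.smul continuous_snd)
    have h2 : Continuous fun p : ℝ × (Fin n → ℝ) => |p.1| * y p.2 :=
      (continuous_fst.abs).mul (hycont.comp continuous_snd)
    have heq := h1.ext_on hd h2 ?_
    · exact congrFun heq (c, u)
    · rintro p ⟨⟨q, v⟩, rfl⟩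
      simp only
      rw [← hιsmul, hagree, hagree]
      have : f (q • v) = |(q : ℝ)| * f v := by
        rw [hf]; simp only; rw [hhom]; push_cast; ring
      exact this
  · -- subadditivity
    intro u v
    have hd : Dense (Set.range fun p : (Fin n → ℚ) × (Fin n → ℚ) => (ι p.1, ι p.2)) :=
      hdr.prodMap hdr
    have hS : IsClosed {p : (Fin n → ℝ) × (Fin n → ℝ) | y (p.1 + p.2) ≤ y p.1 + y p.2} :=
      isClosed_le (hycont.comp (continuous_fst.add continuous_snd))
        ((hycont.comp continuous_fst).add (hycont.comp continuous_snd))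
    have hsubset : (Set.range fun p : (Fin n → ℚ) × (Fin n → ℚ) => (ι p.1, ι p.2)) ⊆
        {p : (Fin n → ℝ) × (Fin n → ℝ) | y (p.1 + p.2) ≤ y p.1 + y p.2} := by
      rintro p ⟨⟨a, b⟩, rfl⟩
      simp only [Set.mem_setOf_eq]
      rw [← hιadd, hagree, hagree, hagree]
      simp only [hf]
      exact_mod_cast hsub a b
    exact hS.closure_subset_iff.2 hsubset (hd (u, v))
  · -- uniqueness
    rintro z ⟨hzc, hzq, -, -⟩
    apply hzc.ext_on hdr hycont
    rintro p ⟨v, rfl⟩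
    rw [hagree]
    exact hzq v
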